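/- Let η, ρ be real constants and let F(u, w, w̃) be a smooth real-valued function on an open set U ⊆ ℝ³. Define the linearization of equation (EWred) at F as the linear operator L_F(δ) := (η δ_{w̃} + δ_{uw̃})(η F_w − F_{uw}) + (η F_{w̃} + F_{uw̃})(η δ_w − δ_{uw}) − (η² δ − δ_{uu}) F_{ww̃} − (η² F − F_{uu}) δ_{ww̃}, acting on smooth functions δ(u, w, w̃). Then: (i) L_F(e^{−ηu}) = 0 on U for every smooth F (whether or not F solves (EWred)); and (ii) if F satisfies (EWred) on U, then L_F(F_w) = 0 and L_F(F_{w̃}) = 0 on U. -/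

import Mathlib

set_option maxHeartbeats 1000000

noncomputable section

/-- Partial derivatives of a function of (u, w, w̃) in its three arguments. -/
def pu (F : ℝ → ℝ → ℝ → ℝ) : ℝ → ℝ → ℝ → ℝ := fun u w wt => deriv (fun s => F s w wt) u
def pw (F : ℝ → ℝ → ℝ → ℝ) : ℝ → ℝ → ℝ → ℝ := fun u w wt => deriv (fun s => F u s wt) w
def pwt (F : ℝ → ℝ → ℝ → ℝ) : ℝ → ℝ → ℝ → ℝ := fun u w wt => deriv (fun s => F u w s) wt

/-- Equation (EWred). -/
def EWred (η ρ : ℝ) (F : ℝ → ℝ → ℝ → ℝ) (u w wt : ℝ) : Prop :=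
  (η * pwt F u w wt + pwt (pu F) u w wt) * (η * pw F u w wt - pw (pu F) u w wt)
    - (η ^ 2 * F u w wt - pu (pu F) u w wt) * pwt (pw F) u w wt
    = 4 * Real.exp (2 * ρ * u)

/-- The linearization L_F(δ) of equation (EWred) at F. -/
def linEWred (η : ℝ) (F δ : ℝ → ℝ → ℝ → ℝ) (u w wt : ℝ) : ℝ :=
  (η * pwt δ u w wt + pwt (pu δ) u w wt) * (η * pw F u w wt - pw (pu F) u w wt)
    + (η * pwt F u w wt + pwt (pu F) u w wt) * (η * pw δ u w wt - pw (pu δ) u w wt)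
    - (η ^ 2 * δ u w wt - pu (pu δ) u w wt) * pwt (pw F) u w wt
    - (η ^ 2 * F u w wt - pu (pu F) u w wt) * pwt (pw δ) u w wt

namespace EWaux

open Topology Filter

abbrev E3 := ℝ × ℝ × ℝ

def pd (v : E3) (g : E3 → ℝ) : E3 → ℝ := fun q => fderiv ℝ g q v

def e1 : E3 := (1,0,0)
def e2 : E3 := (0,1,0)
def e3 : E3 := (0,0,1)

lemma line1 (b c a : ℝ) : HasDerivAt (fun s => ((s, b, c) : E3)) e1 a :=
  (hasDerivAt_id a).prodMk ((hasDerivAt_const a b).prodMk (hasDerivAt_const a c))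

lemma line2 (a c b : ℝ) : HasDerivAt (fun s => ((a, s, c) : E3)) e2 b :=
  (hasDerivAt_const b a).prodMk ((hasDerivAt_id b).prodMk (hasDerivAt_const b c))

lemma line3 (a b c : ℝ) : HasDerivAt (fun s => ((a, b, s) : E3)) e3 c :=
  (hasDerivAt_const c a).prodMk ((hasDerivAt_const c b).prodMk (hasDerivAt_id c))

lemma slice1 {g : E3 → ℝ} {p : E3} (hg : DifferentiableAt ℝ g p) :
    HasDerivAt (fun s => g (s, p.2.1, p.2.2)) (pd e1 g p) p.1 := by
  have := (hg.hasFDerivAt.comp_hasDerivAt p.1 (line1 p.2.1 p.2.2 p.1))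
  exact this

lemma slice2 {g : E3 → ℝ} {p : E3} (hg : DifferentiableAt ℝ g p) :
    HasDerivAt (fun s => g (p.1, s, p.2.2)) (pd e2 g p) p.2.1 := by
  have := (hg.hasFDerivAt.comp_hasDerivAt p.2.1 (line2 p.1 p.2.2 p.2.1))
  exact this

lemma slice3 {g : E3 → ℝ} {p : E3} (hg : DifferentiableAt ℝ g p) :
    HasDerivAt (fun s => g (p.1, p.2.1, s)) (pd e3 g p) p.2.2 := by
  have := (hg.hasFDerivAt.comp_hasDerivAt p.2.2 (line3 p.1 p.2.1 p.2.2))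
  exact this

variable {U : Set E3}

lemma diffAt_of_contDiffOn {G : Type*} [NormedAddCommGroup G] [NormedSpace ℝ G]
    (hU : IsOpen U) {g : E3 → G} (hg : ContDiffOn ℝ (⊤:ℕ∞) g U) {p : E3} (hp : p ∈ U) :
    DifferentiableAt ℝ g p :=
  ((hg.differentiableOn (by simp)) p hp).differentiableAt (hU.mem_nhds hp)

lemma pd_contDiffOn (hU : IsOpen U) {g : E3 → ℝ} (hg : ContDiffOn ℝ (⊤:ℕ∞) g U) (v : E3) :
    ContDiffOn ℝ (⊤:ℕ∞) (pd v g) U := by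
  have h := hg.fderiv_of_isOpen hU (show (⊤:ℕ∞)+1 ≤ ((⊤:ℕ∞):WithTop ℕ∞) from le_of_eq rfl)
  exact h.clm_apply contDiffOn_const

lemma pd_comm (hU : IsOpen U) {g : E3 → ℝ} (hg : ContDiffOn ℝ (⊤:ℕ∞) g U)
    {p : E3} (hp : p ∈ U) (v w : E3) : pd v (pd w g) p = pd w (pd v g) p := by
  have hev : ∀ᶠ y in 𝓝 p, HasFDerivAt g (fderiv ℝ g y) y := by
    filter_upwards [hU.mem_nhds hp] with y hy
    exact (diffAt_of_contDiffOn hU hg hy).hasFDerivAt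
  have hd1 : ContDiffOn ℝ (⊤:ℕ∞) (fderiv ℝ g) U :=
    hg.fderiv_of_isOpen hU (show (⊤:ℕ∞)+1 ≤ ((⊤:ℕ∞):WithTop ℕ∞) from le_of_eq rfl)
  have hd : DifferentiableAt ℝ (fderiv ℝ g) p := diffAt_of_contDiffOn hU hd1 hp
  have hx : HasFDerivAt (fderiv ℝ g) (fderiv ℝ (fderiv ℝ g) p) p := hd.hasFDerivAt
  have key := second_derivative_symmetric_of_eventually hev hx
  have expand : ∀ a b : E3, pd a (pd b g) p = fderiv ℝ (fderiv ℝ g) p a b := by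
    intro a b
    have hc : HasFDerivAt (fun q => (fderiv ℝ g q) b)
        ((ContinuousLinearMap.apply ℝ ℝ b).comp (fderiv ℝ (fderiv ℝ g) p)) p := by
      have := (ContinuousLinearMap.apply ℝ ℝ b).hasFDerivAt.comp p hx
      exact this
    rw [show pd a (pd b g) p = fderiv ℝ (fun q => (fderiv ℝ g q) b) p a from rfl,
      hc.fderiv]
    rfl
  rw [expand, expand, key]

lemma pd_congrOn (hU : IsOpen U) {g₁ g₂ : E3 → ℝ} (h : ∀ q ∈ U, g₁ q = g₂ q)
    {p : E3} (hp : p ∈ U) (v : E3) : pd v g₁ p = pd v g₂ p := by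
  have : g₁ =ᶠ[𝓝 p] g₂ := by filter_upwards [hU.mem_nhds hp] with y hy using h y hy
  simp only [pd, this.fderiv_eq]

section bridge

variable (hU : IsOpen U) {G : ℝ → ℝ → ℝ → ℝ} {g : E3 → ℝ}
  (hg : ContDiffOn ℝ (⊤:ℕ∞) g U)
  (hGg : ∀ a b c : ℝ, ((a,b,c):E3) ∈ U → G a b c = g (a,b,c))

include hU hg hGg

lemma bridge1 {a b c : ℝ} (h : ((a,b,c):E3) ∈ U) :
    HasDerivAt (fun s => G s b c) (pd e1 g (a,b,c)) a := by
  have base := slice1 (p := ((a,b,c):E3)) (diffAt_of_contDiffOn hU hg h)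
  apply base.congr_of_eventuallyEq
  have hcont : Continuous (fun s : ℝ => ((s,b,c):E3)) := continuous_id.prodMk (continuous_const.prodMk continuous_const)
  filter_upwards [hcont.continuousAt.preimage_mem_nhds (hU.mem_nhds h)] with s hs
  exact hGg s b c hs

lemma bridge2 {a b c : ℝ} (h : ((a,b,c):E3) ∈ U) :
    HasDerivAt (fun s => G a s c) (pd e2 g (a,b,c)) b := by
  have base := slice2 (p := ((a,b,c):E3)) (diffAt_of_contDiffOn hU hg h)
  apply base.congr_of_eventuallyEq
  have hcont : Continuous (fun s : ℝ => ((a,s,c):E3)) := continuous_const.prodMk (continuous_id.prodMk continuous_const)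
  filter_upwards [hcont.continuousAt.preimage_mem_nhds (hU.mem_nhds h)] with s hs
  exact hGg a s c hs

lemma bridge3 {a b c : ℝ} (h : ((a,b,c):E3) ∈ U) :
    HasDerivAt (fun s => G a b s) (pd e3 g (a,b,c)) c := by
  have base := slice3 (p := ((a,b,c):E3)) (diffAt_of_contDiffOn hU hg h)
  apply base.congr_of_eventuallyEq
  have hcont : Continuous (fun s : ℝ => ((a,b,s):E3)) := continuous_const.prodMk (continuous_const.prodMk continuous_id)
  filter_upwards [hcont.continuousAt.preimage_mem_nhds (hU.mem_nhds h)] with s hs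
  exact hGg a b s hs

lemma eq1 : ∀ a b c : ℝ, ((a,b,c):E3) ∈ U → pu G a b c = pd e1 g (a,b,c) :=
  fun _ _ _ h => (bridge1 hU hg hGg h).deriv

lemma eq2 : ∀ a b c : ℝ, ((a,b,c):E3) ∈ U → pw G a b c = pd e2 g (a,b,c) :=
  fun _ _ _ h => (bridge2 hU hg hGg h).deriv

lemma eq3 : ∀ a b c : ℝ, ((a,b,c):E3) ∈ U → pwt G a b c = pd e3 g (a,b,c) :=
  fun _ _ _ h => (bridge3 hU hg hGg h).deriv

end bridge

end EWaux

open EWaux Topology Filter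

/-- (i) L_F(e^{−ηu}) = 0 on U for every smooth F; and
(ii) if F solves (EWred) on U then L_F(F_w) = 0 and L_F(F_{w̃}) = 0 on U. -/
theorem linearised_EWred_solutions (η ρ : ℝ)
    (U : Set (ℝ × ℝ × ℝ)) (hU : IsOpen U)
    (F : ℝ → ℝ → ℝ → ℝ)
    (hF : ContDiffOn ℝ (⊤ : ℕ∞) (fun p : ℝ × ℝ × ℝ => F p.1 p.2.1 p.2.2) U) :
    (∀ p ∈ U, linEWred η F (fun u _ _ => Real.exp (-η * u)) p.1 p.2.1 p.2.2 = 0)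
    ∧ ((∀ p ∈ U, EWred η ρ F p.1 p.2.1 p.2.2) →
        (∀ p ∈ U, linEWred η F (pw F) p.1 p.2.1 p.2.2 = 0
          ∧ linEWred η F (pwt F) p.1 p.2.1 p.2.2 = 0)) := by
  constructor
  · rintro ⟨u, w, wt⟩ -
    have hδu : ∀ a : ℝ, HasDerivAt (fun s : ℝ => Real.exp (-η * s)) (-η * Real.exp (-η * a)) a := by
      intro a
      have h := (Real.hasDerivAt_exp (-η * a)).comp a ((hasDerivAt_id a).const_mul (-η))
      simpa [Function.comp_def, mul_comm] using h
    set δ : ℝ → ℝ → ℝ → ℝ := fun u _ _ => Real.exp (-η * u) with hδ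
    have e_pwt : pwt δ = fun _ _ _ => 0 := by funext a b c; simp [pwt, hδ]
    have e_pw : pw δ = fun _ _ _ => 0 := by funext a b c; simp [pw, hδ]
    have e_pu : pu δ = fun a _ _ => -η * Real.exp (-η * a) := by
      funext a b c; exact (hδu a).deriv
    have e_pwtpu : pwt (pu δ) = fun _ _ _ => 0 := by
      rw [e_pu]; funext a b c; simp [pwt]
    have e_pwpu : pw (pu δ) = fun _ _ _ => 0 := by
      rw [e_pu]; funext a b c; simp [pw]
    have e_pupu : pu (pu δ) = fun a _ _ => η ^ 2 * Real.exp (-η * a) := by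
      rw [e_pu]; funext a b c
      have h := ((hδu a).const_mul (-η)).deriv
      simp only [pu, h]; ring
    have e_pwtpw : pwt (pw δ) = fun _ _ _ => 0 := by
      rw [e_pw]; funext a b c; simp [pwt]
    simp only [linEWred, e_pwt, e_pw, e_pwtpu, e_pwpu, e_pupu, e_pwtpw, hδ]
    simp [pwt, pw, pu]
    left
    have e := congrFun (congrFun (congrFun e_pupu u) w) wt
    simp only [pu, hδ, neg_mul] at e
    linarith [e]
  · rintro hEW ⟨u, w, wt⟩ hp
    set f : E3 → ℝ := fun q => F q.1 q.2.1 q.2.2 with hfdef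
    have hf : ContDiffOn ℝ (⊤:ℕ∞) f U := hF
    have hFf : ∀ a b c : ℝ, ((a,b,c):E3) ∈ U → F a b c = f (a,b,c) := fun _ _ _ _ => rfl
    -- smoothness of iterated pd's
    have hf1 := pd_contDiffOn hU hf e1
    have hf2 := pd_contDiffOn hU hf e2
    have hf3 := pd_contDiffOn hU hf e3
    have hf11 := pd_contDiffOn hU hf1 e1
    have hf12 := pd_contDiffOn hU hf2 e1
    have hf13 := pd_contDiffOn hU hf3 e1
    have hf21 := pd_contDiffOn hU hf1 e2
    have hf23 := pd_contDiffOn hU hf3 e2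
    have hf31 := pd_contDiffOn hU hf1 e3
    have hf32 := pd_contDiffOn hU hf2 e3
    -- agreements for first-order partials
    have A_u := eq1 hU hf hFf
    have A_w := eq2 hU hf hFf
    have A_wt := eq3 hU hf hFf
    -- second-order
    have A_uu := eq1 hU hf1 A_u
    have A_uw := eq2 hU hf1 A_u
    have A_uwt := eq3 hU hf1 A_u
    have A_w_u := eq1 hU hf2 A_w
    have A_ww := eq2 hU hf2 A_w
    have A_wwt := eq3 hU hf2 A_w
    have A_wt_u := eq1 hU hf3 A_wt
    have A_wt_w := eq2 hU hf3 A_wt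
    have A_wt_wt := eq3 hU hf3 A_wt
    -- third-order (for δ = pw F)
    have A_w_u_w := eq2 hU hf12 A_w_u
    have A_w_u_wt := eq3 hU hf12 A_w_u
    have A_w_u_u := eq1 hU hf12 A_w_u
    have A_ww_wt := eq3 hU (pd_contDiffOn hU hf2 e2) A_ww
    -- third-order (for δ = pwt F)
    have A_wt_u_w := eq2 hU hf13 A_wt_u
    have A_wt_u_wt := eq3 hU hf13 A_wt_u
    have A_wt_u_u := eq1 hU hf13 A_wt_u
    have A_wt_w_wt := eq3 hU (pd_contDiffOn hU hf3 e2) A_wt_w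
    -- symmetry tools at q := (u,w,wt)
    have S : ∀ a b : E3, pd a (pd b f) ((u,w,wt):E3) = pd b (pd a f) ((u,w,wt):E3) :=
      fun a b => pd_comm hU hf hp a b
    have T1 : ∀ a b c : E3, pd a (pd b (pd c f)) ((u,w,wt):E3)
        = pd b (pd a (pd c f)) ((u,w,wt):E3) :=
      fun a b c => pd_comm hU (pd_contDiffOn hU hf c) hp a b
    have T2 : ∀ a b c : E3, pd a (pd b (pd c f)) ((u,w,wt):E3)
        = pd a (pd c (pd b f)) ((u,w,wt):E3) :=
      fun a b c => pd_congrOn hU (fun r hr => pd_comm hU hf hr b c) hp a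
    constructor
    · -- δ = pw F : differentiate EWred in w
      have h1 : HasDerivAt (fun s => pwt F u s wt) (pd e2 (pd e3 f) ((u,w,wt):E3)) w :=
        bridge2 hU hf3 A_wt hp
      have h2 : HasDerivAt (fun s => pwt (pu F) u s wt)
          (pd e2 (pd e3 (pd e1 f)) ((u,w,wt):E3)) w := bridge2 hU hf31 A_uwt hp
      have h3 : HasDerivAt (fun s => pw F u s wt) (pd e2 (pd e2 f) ((u,w,wt):E3)) w :=
        bridge2 hU hf2 A_w hp
      have h4 : HasDerivAt (fun s => pw (pu F) u s wt)
          (pd e2 (pd e2 (pd e1 f)) ((u,w,wt):E3)) w := bridge2 hU hf21 A_uw hp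
      have h0 : HasDerivAt (fun s => F u s wt) (pd e2 f ((u,w,wt):E3)) w :=
        bridge2 hU hf hFf hp
      have h5 : HasDerivAt (fun s => pu (pu F) u s wt)
          (pd e2 (pd e1 (pd e1 f)) ((u,w,wt):E3)) w := bridge2 hU hf11 A_uu hp
      have h6 : HasDerivAt (fun s => pwt (pw F) u s wt)
          (pd e2 (pd e3 (pd e2 f)) ((u,w,wt):E3)) w := bridge2 hU hf32 A_wwt hp
      have hΦ : HasDerivAt
          (fun s => (η * pwt F u s wt + pwt (pu F) u s wt)
              * (η * pw F u s wt - pw (pu F) u s wt)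
            - (η ^ 2 * F u s wt - pu (pu F) u s wt) * pwt (pw F) u s wt)
          ((η * pd e2 (pd e3 f) ((u,w,wt):E3) + pd e2 (pd e3 (pd e1 f)) ((u,w,wt):E3))
              * (η * pw F u w wt - pw (pu F) u w wt)
            + (η * pwt F u w wt + pwt (pu F) u w wt)
              * (η * pd e2 (pd e2 f) ((u,w,wt):E3) - pd e2 (pd e2 (pd e1 f)) ((u,w,wt):E3))
            - ((η ^ 2 * pd e2 f ((u,w,wt):E3) - pd e2 (pd e1 (pd e1 f)) ((u,w,wt):E3))
                * pwt (pw F) u w wt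
              + (η ^ 2 * F u w wt - pu (pu F) u w wt)
                * pd e2 (pd e3 (pd e2 f)) ((u,w,wt):E3))) w :=
        (((h1.const_mul η).add h2).mul ((h3.const_mul η).sub h4)).sub
          (((h0.const_mul (η ^ 2)).sub h5).mul h6)
      have hzero : HasDerivAt
          (fun s => (η * pwt F u s wt + pwt (pu F) u s wt)
              * (η * pw F u s wt - pw (pu F) u s wt)
            - (η ^ 2 * F u s wt - pu (pu F) u s wt) * pwt (pw F) u s wt)
          0 w := by
        apply (hasDerivAt_const w (4 * Real.exp (2 * ρ * u))).congr_of_eventuallyEq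
        have hcont : Continuous (fun s : ℝ => ((u,s,wt):E3)) := continuous_const.prodMk (continuous_id.prodMk continuous_const)
        filter_upwards [hcont.continuousAt.preimage_mem_nhds (hU.mem_nhds hp)] with s hs
        exact hEW (u, s, wt) hs
      have hD0 := hΦ.unique hzero
      -- now rewrite the goal into pd-language
      show linEWred η F (pw F) u w wt = 0
      rw [linEWred,
        A_wwt u w wt hp, A_w_u_wt u w wt hp, A_uw u w wt hp, A_ww u w wt hp,
        A_w_u_w u w wt hp, A_w_u_u u w wt hp, A_ww_wt u w wt hp, A_w u w wt hp]
      rw [A_wwt u w wt hp, A_w u w wt hp, A_uw u w wt hp] at hD0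
      -- canonicalize third-order derivatives
      rw [T2 e2 e3 e1, T1 e2 e1 e3] at hD0        -- [231] ↦ [123]
      rw [T1 e3 e1 e2, T2 e1 e3 e2]               -- [312] ↦ [123]
      rw [T2 e2 e2 e1, T1 e2 e1 e2] at hD0        -- [221] ↦ [122]
      rw [T1 e2 e1 e2]                            -- [212] ↦ [122]
      rw [T1 e2 e1 e1, T2 e1 e2 e1] at hD0        -- [211] ↦ [112]
      rw [T2 e2 e3 e2] at hD0                     -- [232] ↦ [223]
      rw [T1 e3 e2 e2]                            -- [322] ↦ [232] ↦ need more
      rw [T2 e2 e3 e2]                            -- [232] ↦ [223]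
      rw [S e3 e2] at hD0 ⊢                       -- [32] ↦ [23]
      linear_combination hD0
    · -- δ = pwt F : differentiate EWred in wt
      have k1 : HasDerivAt (fun s => pwt F u w s) (pd e3 (pd e3 f) ((u,w,wt):E3)) wt :=
        bridge3 hU hf3 A_wt hp
      have k2 : HasDerivAt (fun s => pwt (pu F) u w s)
          (pd e3 (pd e3 (pd e1 f)) ((u,w,wt):E3)) wt := bridge3 hU hf31 A_uwt hp
      have k3 : HasDerivAt (fun s => pw F u w s) (pd e3 (pd e2 f) ((u,w,wt):E3)) wt :=
        bridge3 hU hf2 A_w hp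
      have k4 : HasDerivAt (fun s => pw (pu F) u w s)
          (pd e3 (pd e2 (pd e1 f)) ((u,w,wt):E3)) wt := bridge3 hU hf21 A_uw hp
      have k0 : HasDerivAt (fun s => F u w s) (pd e3 f ((u,w,wt):E3)) wt :=
        bridge3 hU hf hFf hp
      have k5 : HasDerivAt (fun s => pu (pu F) u w s)
          (pd e3 (pd e1 (pd e1 f)) ((u,w,wt):E3)) wt := bridge3 hU hf11 A_uu hp
      have k6 : HasDerivAt (fun s => pwt (pw F) u w s)
          (pd e3 (pd e3 (pd e2 f)) ((u,w,wt):E3)) wt := bridge3 hU hf32 A_wwt hp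
      have hΨ : HasDerivAt
          (fun s => (η * pwt F u w s + pwt (pu F) u w s)
              * (η * pw F u w s - pw (pu F) u w s)
            - (η ^ 2 * F u w s - pu (pu F) u w s) * pwt (pw F) u w s)
          ((η * pd e3 (pd e3 f) ((u,w,wt):E3) + pd e3 (pd e3 (pd e1 f)) ((u,w,wt):E3))
              * (η * pw F u w wt - pw (pu F) u w wt)
            + (η * pwt F u w wt + pwt (pu F) u w wt)
              * (η * pd e3 (pd e2 f) ((u,w,wt):E3) - pd e3 (pd e2 (pd e1 f)) ((u,w,wt):E3))
            - ((η ^ 2 * pd e3 f ((u,w,wt):E3) - pd e3 (pd e1 (pd e1 f)) ((u,w,wt):E3))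
                * pwt (pw F) u w wt
              + (η ^ 2 * F u w wt - pu (pu F) u w wt)
                * pd e3 (pd e3 (pd e2 f)) ((u,w,wt):E3))) wt :=
        (((k1.const_mul η).add k2).mul ((k3.const_mul η).sub k4)).sub
          (((k0.const_mul (η ^ 2)).sub k5).mul k6)
      have hzero : HasDerivAt
          (fun s => (η * pwt F u w s + pwt (pu F) u w s)
              * (η * pw F u w s - pw (pu F) u w s)
            - (η ^ 2 * F u w s - pu (pu F) u w s) * pwt (pw F) u w s)
          0 wt := by
        apply (hasDerivAt_const wt (4 * Real.exp (2 * ρ * u))).congr_of_eventuallyEq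
        have hcont : Continuous (fun s : ℝ => ((u,w,s):E3)) := continuous_const.prodMk (continuous_const.prodMk continuous_id)
        filter_upwards [hcont.continuousAt.preimage_mem_nhds (hU.mem_nhds hp)] with s hs
        exact hEW (u, w, s) hs
      have hD0 := hΨ.unique hzero
      show linEWred η F (pwt F) u w wt = 0
      rw [linEWred,
        A_wt_wt u w wt hp, A_wt_u_wt u w wt hp, A_wt_w u w wt hp, A_wt_u_w u w wt hp,
        A_wt_u_u u w wt hp, A_wt_w_wt u w wt hp, A_wt u w wt hp,
        A_w u w wt hp, A_uw u w wt hp, A_uwt u w wt hp, A_wwt u w wt hp]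
      rw [A_w u w wt hp, A_uw u w wt hp, A_wt u w wt hp, A_uwt u w wt hp,
        A_wwt u w wt hp] at hD0
      -- canonicalize
      rw [T2 e3 e3 e1, T1 e3 e1 e3] at hD0            -- [331] ↦ [133]
      rw [T1 e3 e2 e1, T2 e2 e3 e1, T1 e2 e1 e3] at hD0 -- [321] ↦ [123]
      rw [T1 e3 e1 e1, T2 e1 e3 e1] at hD0            -- [311] ↦ [113]
      rw [T2 e3 e3 e2, T1 e3 e2 e3] at hD0            -- [332] ↦ [233]
      rw [T1 e3 e1 e3]                                -- [313] ↦ [133]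
      rw [T1 e2 e1 e3]                                -- [213] ↦ [123]
      rw [T1 e3 e2 e3]                                -- [323] ↦ [233]
      rw [S e3 e2] at hD0 ⊢                           -- [32] ↦ [23]
      linear_combination hD0
end
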